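/- Under positivity and the tilting assumption at level t, the conditional probability of receiving treatment 1−t given X and the potential outcome Y(t) has the logistic representation: almost surely E[1{T=1−t} | σ(X, Y(t))] = expit( h(X) + γ_t s_t(Y(t)) ), where h(X) := logit(π_{1−t}(X)) − log C_t(X), C_t(X) := E[e^{γ_t s_t(Y(t))} 1{T=t} | σ(X)] / π_t(X), expit(u) = e^u/(1+e^u) and logit(p) = log(p/(1−p)). -/

import Mathlib

open MeasureTheory Real

private lemma integral_stronglyMeasurable_mul_condexp
    {Ω : Type*} {m m0 : MeasurableSpace Ω} (hm : m ≤ m0) (P : Measure Ω)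
    [IsFiniteMeasure P] {φ Z : Ω → ℝ}
    (hφ : StronglyMeasurable[m] φ) (hZ : Integrable Z P)
    (hφZ : Integrable (φ * Z) P) :
    ∫ ω, φ ω * (P[Z|m]) ω ∂P = ∫ ω, φ ω * Z ω ∂P := by
  have h := condExp_mul_of_stronglyMeasurable_left (μ := P) hφ hφZ hZ
  calc ∫ ω, φ ω * (P[Z|m]) ω ∂P = ∫ ω, (P[φ * Z|m]) ω ∂P :=
        (integral_congr_ae (by filter_upwards [h] with ω hω; exact hω)).symm
    _ = ∫ ω, (φ * Z) ω ∂P := integral_condExp hm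
    _ = ∫ ω, φ ω * Z ω ∂P := rfl

/-- Under positivity and the tilting assumption at level `t`, the conditional
probability of receiving treatment `1−t` given `X` and the potential outcome `Y(t)` has the
logistic representation
`E[1{T=1−t} | σ(X, Y(t))] = expit( h(X) + γ_t s_t(Y(t)) )` a.s., where
`h(X) = logit(π_{1−t}(X)) − log C_t(X)` and `C_t(X) = E[e^{γ_t s_t(Y(t))}1{T=t}|σ(X)]/π_t(X)`. -/
theorem sensitivity_logistic_representation
    {Ω : Type*} [MeasurableSpace Ω] (P : Measure Ω) [IsProbabilityMeasure P]
    {p : ℕ} (X : Ω → (Fin p → ℝ)) (T : Ω → ℝ)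
    (hX : Measurable X) (hT : Measurable T)
    (hTval : ∀ ω, T ω = 0 ∨ T ω = 1)
    -- fixed treatment level `t ∈ {0,1}` and the potential outcome `Y(t)`
    (t : ℝ) (ht : t = 0 ∨ t = 1)
    (Yt : Ω → ℝ) (hYtm : Measurable Yt)
    -- tilting function and sensitivity parameter
    (s : ℝ → ℝ) (hs : Measurable s) (γ : ℝ)
    -- versions of the conditional treatment probabilities given `σ(X)`
    (πt πs : (Fin p → ℝ) → ℝ) (hπt : Measurable πt) (hπs : Measurable πs)
    (hπtv : (fun ω => πt (X ω)) =ᵐ[P]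
      P[(fun ω => if T ω = t then (1 : ℝ) else 0) | MeasurableSpace.comap X inferInstance])
    (hπsv : (fun ω => πs (X ω)) =ᵐ[P]
      P[(fun ω => if T ω = 1 - t then (1 : ℝ) else 0) | MeasurableSpace.comap X inferInstance])
    -- positivity
    (ε : ℝ) (hε : 0 < ε)
    (hpos : ∀ᵐ ω ∂P, ε ≤ πt (X ω) ∧ πt (X ω) ≤ 1 - ε)
    -- integrability of the exponential tilt
    (hExpInt : Integrable (fun ω => Real.exp (γ * s (Yt ω))) P)
    -- `C_t(X)`, a version of `E[e^{γ_t s_t(Y(t))}1{T=t}|σ(X)]/π_t(X)`, with `0 < C_t(X)` a.s.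
    (Ct : (Fin p → ℝ) → ℝ) (hCt : Measurable Ct)
    (hCtv : (fun ω => Ct (X ω)) =ᵐ[P] fun ω =>
      (P[(fun ω => Real.exp (γ * s (Yt ω)) * (if T ω = t then (1 : ℝ) else 0)) |
        MeasurableSpace.comap X inferInstance]) ω / πt (X ω))
    (hCpos : ∀ᵐ ω ∂P, 0 < Ct (X ω))
    -- tilting assumption at level `t` (for every bounded measurable `g`)
    (htilt : ∀ g : ℝ → ℝ, Measurable g → (∃ C, ∀ y, |g y| ≤ C) →
      ∀ᵐ ω ∂P,
        (P[(fun ω => g (Yt ω) * (if T ω = 1 - t then (1 : ℝ) else 0)) |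
          MeasurableSpace.comap X inferInstance]) ω *
        (P[(fun ω => Real.exp (γ * s (Yt ω)) * (if T ω = t then (1 : ℝ) else 0)) |
          MeasurableSpace.comap X inferInstance]) ω =
        (P[(fun ω => g (Yt ω) * Real.exp (γ * s (Yt ω)) * (if T ω = t then (1 : ℝ) else 0)) |
          MeasurableSpace.comap X inferInstance]) ω *
        (P[(fun ω => if T ω = 1 - t then (1 : ℝ) else 0) |
          MeasurableSpace.comap X inferInstance]) ω) :
    (P[(fun ω => if T ω = 1 - t then (1 : ℝ) else 0) |
        MeasurableSpace.comap (fun ω => (X ω, Yt ω)) inferInstance]) =ᵐ[P]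
      fun ω =>
        Real.exp (Real.log (πs (X ω) / (1 - πs (X ω))) - Real.log (Ct (X ω)) + γ * s (Yt ω)) /
          (1 + Real.exp (Real.log (πs (X ω) / (1 - πs (X ω))) - Real.log (Ct (X ω))
            + γ * s (Yt ω))) := by
  classical
  have hm : MeasurableSpace.comap X inferInstance ≤ ‹MeasurableSpace Ω› := hX.comap_le
  have hXYm : Measurable fun ω => (X ω, Yt ω) := hX.prodMk hYtm
  have hmXY : MeasurableSpace.comap (fun ω => (X ω, Yt ω)) inferInstance
      ≤ ‹MeasurableSpace Ω› := hXYm.comap_le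
  -- basic indicator facts
  have hIsum : ∀ ω, (if T ω = t then (1:ℝ) else 0) + (if T ω = 1 - t then (1:ℝ) else 0) = 1 := by
    intro ω; rcases hTval ω with h | h <;> rcases ht with h' | h' <;> norm_num [h, h']
  have hI1m : Measurable (fun ω => if T ω = 1 - t then (1:ℝ) else 0) :=
    Measurable.ite (hT (measurableSet_singleton _)) measurable_const measurable_const
  have hI0m : Measurable (fun ω => if T ω = t then (1:ℝ) else 0) :=
    Measurable.ite (hT (measurableSet_singleton _)) measurable_const measurable_const
  have hI1b : ∀ ω, 0 ≤ (if T ω = 1 - t then (1:ℝ) else 0) ∧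
      (if T ω = 1 - t then (1:ℝ) else 0) ≤ 1 := by intro ω; split <;> norm_num
  have hI0b : ∀ ω, 0 ≤ (if T ω = t then (1:ℝ) else 0) ∧
      (if T ω = t then (1:ℝ) else 0) ≤ 1 := by intro ω; split <;> norm_num
  have hI1int : Integrable (fun ω => if T ω = 1 - t then (1:ℝ) else 0) P := by
    refine (integrable_const (1:ℝ)).mono' hI1m.aestronglyMeasurable ?_
    refine Filter.Eventually.of_forall fun ω => ?_
    rw [Real.norm_eq_abs, abs_le]; constructor <;> [linarith [(hI1b ω).1]; exact (hI1b ω).2]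
  have hI0int : Integrable (fun ω => if T ω = t then (1:ℝ) else 0) P := by
    refine (integrable_const (1:ℝ)).mono' hI0m.aestronglyMeasurable ?_
    refine Filter.Eventually.of_forall fun ω => ?_
    rw [Real.norm_eq_abs, abs_le]; constructor <;> [linarith [(hI0b ω).1]; exact (hI0b ω).2]
  have hem : Measurable (fun ω => Real.exp (γ * s (Yt ω))) :=
    (Real.measurable_exp.comp ((measurable_const.mul (hs.comp hYtm))))
  have heI0int : Integrable (fun ω => Real.exp (γ * s (Yt ω)) * (if T ω = t then (1:ℝ) else 0)) P := by
    refine hExpInt.mono' (hem.mul hI0m).aestronglyMeasurable (Filter.Eventually.of_forall fun ω => ?_)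
    rw [Real.norm_eq_abs, abs_mul, abs_of_nonneg (Real.exp_pos _).le,
      abs_of_nonneg (hI0b ω).1]
    nlinarith [(Real.exp_pos (γ * s (Yt ω))).le, (hI0b ω).1, (hI0b ω).2]
  -- the conditional expectation `c = E[e^{γ s(Yt)} 1{T=t} | σ(X)]`
  set c : Ω → ℝ := P[(fun ω => Real.exp (γ * s (Yt ω)) * (if T ω = t then (1 : ℝ) else 0)) |
    MeasurableSpace.comap X inferInstance] with hcdef
  have hcint : Integrable c P := integrable_condExp
  have hcm : Measurable[MeasurableSpace.comap X inferInstance] c :=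
    stronglyMeasurable_condExp.measurable
  have hcm0 : Measurable c := hcm.mono hm le_rfl
  -- a.e. facts
  have hπsum : ∀ᵐ ω ∂P, πt (X ω) + πs (X ω) = 1 := by
    have h1 := condExp_add (μ := P) (m := MeasurableSpace.comap X inferInstance) hI0int hI1int
    have h2 : ((fun ω => if T ω = t then (1:ℝ) else 0) +
        fun ω => if T ω = 1 - t then (1:ℝ) else 0) = fun _ => (1:ℝ) :=
      funext fun ω => hIsum ω
    rw [h2, condExp_const hm] at h1
    filter_upwards [hπtv, hπsv, h1] with ω e1 e2 e3
    simp only [Pi.add_apply] at e3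
    rw [← e1, ← e2] at e3
    linarith
  have hπsb : ∀ᵐ ω ∂P, ε ≤ πs (X ω) ∧ πs (X ω) ≤ 1 - ε := by
    filter_upwards [hπsum, hpos] with ω h1 h2
    constructor <;> linarith [h2.1, h2.2]
  have hceq : (fun ω => c ω) =ᵐ[P] fun ω => πt (X ω) * Ct (X ω) := by
    filter_upwards [hCtv, hpos] with ω h1 h2
    have hne : πt (X ω) ≠ 0 := by linarith [h2.1]
    rw [h1]
    field_simp
  -- rectangle/tilting integral identity
  have key : ∀ g : ℝ → ℝ, Measurable g → (∀ y, |g y| ≤ 1) →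
      ∀ B1 : Set (Fin p → ℝ), MeasurableSet B1 →
      ∫ ω, Set.indicator B1 (fun _ => (1:ℝ)) (X ω) * c ω *
          (g (Yt ω) * (if T ω = 1 - t then (1:ℝ) else 0)) ∂P =
      ∫ ω, Set.indicator B1 (fun _ => (1:ℝ)) (X ω) * πs (X ω) *
          (g (Yt ω) * Real.exp (γ * s (Yt ω)) * (if T ω = t then (1:ℝ) else 0)) ∂P := by
    intro g hg hgb B1 hB1
    have htilt' := htilt g hg ⟨1, hgb⟩
    have hZ1m : Measurable (fun ω => g (Yt ω) * (if T ω = 1 - t then (1:ℝ) else 0)) :=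
      (hg.comp hYtm).mul hI1m
    have hZ1b : ∀ ω, |g (Yt ω) * (if T ω = 1 - t then (1:ℝ) else 0)| ≤ 1 := by
      intro ω
      rw [abs_mul]
      exact mul_le_one₀ (hgb _) (abs_nonneg _) (by rw [abs_of_nonneg (hI1b ω).1]; exact (hI1b ω).2)
    have hZ1int : Integrable (fun ω => g (Yt ω) * (if T ω = 1 - t then (1:ℝ) else 0)) P := by
      refine (integrable_const (1:ℝ)).mono' hZ1m.aestronglyMeasurable ?_
      exact Filter.Eventually.of_forall fun ω => hZ1b ω
    have hZ2m : Measurable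
        (fun ω => g (Yt ω) * Real.exp (γ * s (Yt ω)) * (if T ω = t then (1:ℝ) else 0)) :=
      ((hg.comp hYtm).mul hem).mul hI0m
    have hZ2b : ∀ ω, |g (Yt ω) * Real.exp (γ * s (Yt ω)) * (if T ω = t then (1:ℝ) else 0)|
        ≤ Real.exp (γ * s (Yt ω)) := by
      intro ω
      rw [abs_mul, abs_mul, abs_of_nonneg (Real.exp_pos _).le, abs_of_nonneg (hI0b ω).1]
      split_ifs with h
      · nlinarith [hgb (Yt ω), abs_nonneg (g (Yt ω)), (Real.exp_pos (γ * s (Yt ω))).le]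
      · simpa using (Real.exp_pos (γ * s (Yt ω))).le
    have hZ2int : Integrable
        (fun ω => g (Yt ω) * Real.exp (γ * s (Yt ω)) * (if T ω = t then (1:ℝ) else 0)) P := by
      refine hExpInt.mono' hZ2m.aestronglyMeasurable ?_
      exact Filter.Eventually.of_forall fun ω => hZ2b ω
    have hXm' : Measurable[MeasurableSpace.comap X inferInstance] X := fun u hu => ⟨u, hu, rfl⟩
    have hφm : Measurable[MeasurableSpace.comap X inferInstance]
        (fun ω => Set.indicator B1 (fun _ => (1:ℝ)) (X ω)) :=
      (measurable_const.indicator hB1).comp hXm'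
    have hφm0 : Measurable (fun ω => Set.indicator B1 (fun _ => (1:ℝ)) (X ω)) :=
      (measurable_const.indicator hB1).comp hX
    have hφb : ∀ ω, 0 ≤ Set.indicator B1 (fun _ => (1:ℝ)) (X ω) ∧
        Set.indicator B1 (fun _ => (1:ℝ)) (X ω) ≤ 1 := by
      intro ω
      by_cases h : X ω ∈ B1 <;> simp [Set.indicator, h]
    have hF1 : StronglyMeasurable[MeasurableSpace.comap X inferInstance]
        (fun ω => Set.indicator B1 (fun _ => (1:ℝ)) (X ω) * c ω) :=
      (hφm.mul hcm).stronglyMeasurable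
    have hF2 : StronglyMeasurable[MeasurableSpace.comap X inferInstance]
        (fun ω => Set.indicator B1 (fun _ => (1:ℝ)) (X ω) * πs (X ω)) :=
      (hφm.mul (hπs.comp hXm')).stronglyMeasurable
    have hF1Z1int : Integrable ((fun ω => Set.indicator B1 (fun _ => (1:ℝ)) (X ω) * c ω) *
        (fun ω => g (Yt ω) * (if T ω = 1 - t then (1:ℝ) else 0))) P := by
      refine hcint.norm.mono' ((hφm0.mul hcm0).mul hZ1m).aestronglyMeasurable ?_
      refine Filter.Eventually.of_forall fun ω => ?_
      simp only [Pi.mul_apply, Real.norm_eq_abs]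
      rw [abs_mul, abs_mul]
      calc |Set.indicator B1 (fun _ => (1:ℝ)) (X ω)| * |c ω| *
            |g (Yt ω) * (if T ω = 1 - t then (1:ℝ) else 0)|
          ≤ 1 * |c ω| * 1 := by
            refine mul_le_mul (mul_le_mul ?_ le_rfl (abs_nonneg _) zero_le_one) (hZ1b ω)
              (abs_nonneg _) (by positivity)
            rw [abs_of_nonneg (hφb ω).1]; exact (hφb ω).2
        _ = |c ω| := by ring
    have hF2Z2int : Integrable ((fun ω => Set.indicator B1 (fun _ => (1:ℝ)) (X ω) * πs (X ω)) *
        (fun ω => g (Yt ω) * Real.exp (γ * s (Yt ω)) * (if T ω = t then (1:ℝ) else 0))) P := by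
      refine hExpInt.mono' ((hφm0.mul (hπs.comp hX)).mul hZ2m).aestronglyMeasurable ?_
      filter_upwards [hπsb] with ω hω
      simp only [Pi.mul_apply, Real.norm_eq_abs]
      rw [abs_mul, abs_mul]
      have h1 : |πs (X ω)| ≤ 1 := by rw [abs_le]; constructor <;> linarith [hω.1, hω.2]
      calc |Set.indicator B1 (fun _ => (1:ℝ)) (X ω)| * |πs (X ω)| *
            |g (Yt ω) * Real.exp (γ * s (Yt ω)) * (if T ω = t then (1:ℝ) else 0)|
          ≤ 1 * 1 * Real.exp (γ * s (Yt ω)) := by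
            refine mul_le_mul (mul_le_mul ?_ h1 (abs_nonneg _) zero_le_one) (hZ2b ω)
              (abs_nonneg _) (by positivity)
            rw [abs_of_nonneg (hφb ω).1]; exact (hφb ω).2
        _ = Real.exp (γ * s (Yt ω)) := by ring
    have hmid : ∫ ω, Set.indicator B1 (fun _ => (1:ℝ)) (X ω) * c ω *
          (P[(fun ω => g (Yt ω) * (if T ω = 1 - t then (1:ℝ) else 0)) |
            MeasurableSpace.comap X inferInstance]) ω ∂P =
        ∫ ω, Set.indicator B1 (fun _ => (1:ℝ)) (X ω) * πs (X ω) *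
          (P[(fun ω => g (Yt ω) * Real.exp (γ * s (Yt ω)) * (if T ω = t then (1:ℝ) else 0)) |
            MeasurableSpace.comap X inferInstance]) ω ∂P := by
      refine integral_congr_ae ?_
      filter_upwards [htilt', hπsv] with ω h1 h2
      rw [h2]
      linear_combination Set.indicator B1 (fun _ => (1:ℝ)) (X ω) * h1
    have hL := integral_stronglyMeasurable_mul_condexp hm P hF1 hZ1int hF1Z1int
    have hR := integral_stronglyMeasurable_mul_condexp hm P hF2 hZ2int hF2Z2int
    exact (hL.symm.trans hmid).trans hR
  -- nonnegativity / positivity of c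
  have hcpos : ∀ᵐ ω ∂P, 0 < c ω := by
    filter_upwards [hceq, hpos, hCpos] with ω h1 h2 h3
    rw [h1]
    exact mul_pos (lt_of_lt_of_le hε h2.1) h3
  have hf1m : Measurable (fun ω => c ω * (if T ω = 1 - t then (1:ℝ) else 0)) := hcm0.mul hI1m
  have hf2m : Measurable (fun ω => πs (X ω) *
      (Real.exp (γ * s (Yt ω)) * (if T ω = t then (1:ℝ) else 0))) :=
    (hπs.comp hX).mul (hem.mul hI0m)
  have hf1int : Integrable (fun ω => c ω * (if T ω = 1 - t then (1:ℝ) else 0)) P := by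
    refine hcint.norm.mono' hf1m.aestronglyMeasurable (Filter.Eventually.of_forall fun ω => ?_)
    simp only [Real.norm_eq_abs]
    rw [abs_mul]
    split_ifs <;> simp [abs_nonneg]
  have hf2int : Integrable (fun ω => πs (X ω) *
      (Real.exp (γ * s (Yt ω)) * (if T ω = t then (1:ℝ) else 0))) P := by
    refine hExpInt.mono' hf2m.aestronglyMeasurable ?_
    filter_upwards [hπsb] with ω hω
    simp only [Real.norm_eq_abs]
    have h1 : |πs (X ω)| ≤ 1 := by rw [abs_le]; constructor <;> linarith [hω.1, hω.2]
    rw [abs_mul]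
    split_ifs with h
    · rw [mul_one, abs_of_nonneg (Real.exp_pos _).le]
      nlinarith [(Real.exp_pos (γ * s (Yt ω))).le, abs_nonneg (πs (X ω))]
    · simp [(Real.exp_pos (γ * s (Yt ω))).le]
  have hf1nn : ∀ᵐ ω ∂P, 0 ≤ c ω * (if T ω = 1 - t then (1:ℝ) else 0) := by
    filter_upwards [hcpos] with ω hω
    exact mul_nonneg hω.le (hI1b ω).1
  have hf2nn : ∀ᵐ ω ∂P, 0 ≤ πs (X ω) *
      (Real.exp (γ * s (Yt ω)) * (if T ω = t then (1:ℝ) else 0)) := by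
    filter_upwards [hπsb] with ω hω
    exact mul_nonneg (by linarith [hω.1]) (mul_nonneg (Real.exp_pos _).le (hI0b ω).1)
  -- the two tilted measures agree
  have hmeas_eq :
      (P.withDensity (fun ω => ENNReal.ofReal (c ω * (if T ω = 1 - t then (1:ℝ) else 0)))).map
        (fun ω => (X ω, Yt ω)) =
      (P.withDensity (fun ω => ENNReal.ofReal (πs (X ω) *
        (Real.exp (γ * s (Yt ω)) * (if T ω = t then (1:ℝ) else 0))))).map
        (fun ω => (X ω, Yt ω)) := by
    have hrect : ∀ B1 : Set (Fin p → ℝ), MeasurableSet B1 → ∀ B2 : Set ℝ, MeasurableSet B2 →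
        ((P.withDensity (fun ω => ENNReal.ofReal (c ω * (if T ω = 1 - t then (1:ℝ) else 0)))).map
          (fun ω => (X ω, Yt ω))) (B1 ×ˢ B2) =
        ((P.withDensity (fun ω => ENNReal.ofReal (πs (X ω) *
          (Real.exp (γ * s (Yt ω)) * (if T ω = t then (1:ℝ) else 0))))).map
          (fun ω => (X ω, Yt ω))) (B1 ×ˢ B2) := by
      intro B1 hB1 B2 hB2
      have hS : MeasurableSet ((fun ω => (X ω, Yt ω)) ⁻¹' (B1 ×ˢ B2)) := hXYm (hB1.prod hB2)
      rw [Measure.map_apply hXYm (hB1.prod hB2), Measure.map_apply hXYm (hB1.prod hB2),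
        withDensity_apply _ hS, withDensity_apply _ hS,
        ← ofReal_integral_eq_lintegral_ofReal hf1int.integrableOn (ae_restrict_of_ae hf1nn),
        ← ofReal_integral_eq_lintegral_ofReal hf2int.integrableOn (ae_restrict_of_ae hf2nn)]
      congr 1
      rw [← integral_indicator hS, ← integral_indicator hS]
      have hgB2m : Measurable (Set.indicator B2 (fun _ => (1:ℝ))) :=
        measurable_const.indicator hB2
      have hgB2b : ∀ y, |Set.indicator B2 (fun _ => (1:ℝ)) y| ≤ 1 := by
        intro y; by_cases h : y ∈ B2 <;> simp [Set.indicator, h]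
      have e1 : ∀ ω, Set.indicator ((fun ω => (X ω, Yt ω)) ⁻¹' (B1 ×ˢ B2))
          (fun ω => c ω * (if T ω = 1 - t then (1:ℝ) else 0)) ω =
          Set.indicator B1 (fun _ => (1:ℝ)) (X ω) * c ω *
            (Set.indicator B2 (fun _ => (1:ℝ)) (Yt ω) * (if T ω = 1 - t then (1:ℝ) else 0)) := by
        intro ω
        by_cases h1 : X ω ∈ B1 <;> by_cases h2 : Yt ω ∈ B2 <;>
          simp [Set.indicator_apply, Set.mem_preimage, Set.mem_prod, h1, h2] <;> ring
      have e2 : ∀ ω, Set.indicator ((fun ω => (X ω, Yt ω)) ⁻¹' (B1 ×ˢ B2))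
          (fun ω => πs (X ω) *
            (Real.exp (γ * s (Yt ω)) * (if T ω = t then (1:ℝ) else 0))) ω =
          Set.indicator B1 (fun _ => (1:ℝ)) (X ω) * πs (X ω) *
            (Set.indicator B2 (fun _ => (1:ℝ)) (Yt ω) * Real.exp (γ * s (Yt ω)) *
              (if T ω = t then (1:ℝ) else 0)) := by
        intro ω
        by_cases h1 : X ω ∈ B1 <;> by_cases h2 : Yt ω ∈ B2 <;>
          simp [Set.indicator_apply, Set.mem_preimage, Set.mem_prod, h1, h2] <;> ring
      rw [integral_congr_ae (Filter.Eventually.of_forall e1),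
        integral_congr_ae (Filter.Eventually.of_forall e2)]
      exact key (Set.indicator B2 (fun _ => (1:ℝ))) hgB2m hgB2b B1 hB1
    haveI hfin1 : IsFiniteMeasure (P.withDensity
        (fun ω => ENNReal.ofReal (c ω * (if T ω = 1 - t then (1:ℝ) else 0)))) :=
      isFiniteMeasure_withDensity_ofReal hf1int.2
    haveI hfin1' : IsFiniteMeasure ((P.withDensity
        (fun ω => ENNReal.ofReal (c ω * (if T ω = 1 - t then (1:ℝ) else 0)))).map
        (fun ω => (X ω, Yt ω))) :=
      ⟨by rw [Measure.map_apply hXYm MeasurableSet.univ]; exact measure_lt_top _ _⟩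
    refine MeasureTheory.ext_of_generate_finite _ generateFrom_prod.symm isPiSystem_prod ?_ ?_
    · rintro A ⟨B1, hB1, B2, hB2, rfl⟩
      exact hrect B1 hB1 B2 hB2
    · have := hrect Set.univ MeasurableSet.univ Set.univ MeasurableSet.univ
      rwa [Set.univ_prod_univ] at this
  -- measurability of densities and weight
  have hd1m : Measurable (fun ω => ENNReal.ofReal (c ω * (if T ω = 1 - t then (1:ℝ) else 0))) :=
    ENNReal.measurable_ofReal.comp hf1m
  have hd2m : Measurable (fun ω => ENNReal.ofReal (πs (X ω) *
      (Real.exp (γ * s (Yt ω)) * (if T ω = t then (1:ℝ) else 0)))) :=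
    ENNReal.measurable_ofReal.comp hf2m
  have hWm : Measurable (fun q : (Fin p → ℝ) × ℝ => ENNReal.ofReal
      ((πs q.1 * Real.exp (γ * s q.2) + πt q.1 * Ct q.1)⁻¹)) :=
    ENNReal.measurable_ofReal.comp
      (((hπs.comp measurable_fst).mul
        (Real.measurable_exp.comp (measurable_const.mul (hs.comp measurable_snd)))).add
        ((hπt.comp measurable_fst).mul (hCt.comp measurable_fst))).inv
  -- step D: weighted lintegral identity for arbitrary measurable sets
  have hstepD : ∀ A : Set ((Fin p → ℝ) × ℝ), MeasurableSet A →
      ∫⁻ ω, ENNReal.ofReal (c ω * (if T ω = 1 - t then (1:ℝ) else 0)) *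
          ((A.indicator (fun _ => (1:ENNReal)) (X ω, Yt ω)) *
            ENNReal.ofReal ((πs (X ω) * Real.exp (γ * s (Yt ω)) +
              πt (X ω) * Ct (X ω))⁻¹)) ∂P =
      ∫⁻ ω, ENNReal.ofReal (πs (X ω) *
            (Real.exp (γ * s (Yt ω)) * (if T ω = t then (1:ℝ) else 0))) *
          ((A.indicator (fun _ => (1:ENNReal)) (X ω, Yt ω)) *
            ENNReal.ofReal ((πs (X ω) * Real.exp (γ * s (Yt ω)) +
              πt (X ω) * Ct (X ω))⁻¹)) ∂P := by
    intro A hA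
    have hFm : Measurable (fun q : (Fin p → ℝ) × ℝ =>
        (A.indicator (fun _ => (1:ENNReal)) q) * ENNReal.ofReal
          ((πs q.1 * Real.exp (γ * s q.2) + πt q.1 * Ct q.1)⁻¹)) :=
      (measurable_const.indicator hA).mul hWm
    have h1 := congrArg (fun μ : Measure ((Fin p → ℝ) × ℝ) =>
      ∫⁻ q, (A.indicator (fun _ => (1:ENNReal)) q) * ENNReal.ofReal
        ((πs q.1 * Real.exp (γ * s q.2) + πt q.1 * Ct q.1)⁻¹) ∂μ) hmeas_eq
    exact ((lintegral_withDensity_eq_lintegral_mul P hd1m (hFm.comp hXYm)).symm.trans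
      ((lintegral_map hFm hXYm).symm.trans (h1.trans ((lintegral_map hFm hXYm).trans
        (lintegral_withDensity_eq_lintegral_mul P hd2m (hFm.comp hXYm))))))
  -- positivity of the two weights
  have haefacts : ∀ᵐ ω ∂P, 0 < πs (X ω) * Real.exp (γ * s (Yt ω)) ∧
      0 < πt (X ω) * Ct (X ω) := by
    filter_upwards [hπsb, hpos, hCpos] with ω h1 h2 h3
    exact ⟨mul_pos (lt_of_lt_of_le hε h1.1) (Real.exp_pos _),
      mul_pos (lt_of_lt_of_le hε h2.1) h3⟩
  -- the candidate function equals a·D⁻¹ a.e.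
  have hg_ae : (fun ω =>
        Real.exp (Real.log (πs (X ω) / (1 - πs (X ω))) - Real.log (Ct (X ω)) + γ * s (Yt ω)) /
          (1 + Real.exp (Real.log (πs (X ω) / (1 - πs (X ω))) - Real.log (Ct (X ω))
            + γ * s (Yt ω)))) =ᵐ[P]
      fun ω => πs (X ω) * Real.exp (γ * s (Yt ω)) *
        (πs (X ω) * Real.exp (γ * s (Yt ω)) + πt (X ω) * Ct (X ω))⁻¹ := by
    filter_upwards [hπsum, hpos, hCpos, hπsb, haefacts] with ω h1 h2 h3 h4 h5
    have hB : (1:ℝ) - πs (X ω) = πt (X ω) := by linarith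
    rw [hB]
    have hπtpos : (0:ℝ) < πt (X ω) := lt_of_lt_of_le hε h2.1
    have hπspos : (0:ℝ) < πs (X ω) := lt_of_lt_of_le hε h4.1
    have hEq : Real.exp (Real.log (πs (X ω) / πt (X ω)) - Real.log (Ct (X ω)) + γ * s (Yt ω))
        = πs (X ω) * Real.exp (γ * s (Yt ω)) / (πt (X ω) * Ct (X ω)) := by
      rw [Real.exp_add, Real.exp_sub, Real.exp_log (div_pos hπspos hπtpos), Real.exp_log h3]
      field_simp
    rw [hEq]
    have hy : πt (X ω) * Ct (X ω) ≠ 0 := ne_of_gt h5.2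
    have hxy : πs (X ω) * Real.exp (γ * s (Yt ω)) + πt (X ω) * Ct (X ω) ≠ 0 := by
      nlinarith [h5.1, h5.2]
    field_simp
    ring
  -- final application of the characterization of condexp
  have hXYm' : Measurable[MeasurableSpace.comap (fun ω => (X ω, Yt ω)) inferInstance]
      (fun ω => (X ω, Yt ω)) := fun u hu => ⟨u, hu, rfl⟩
  have hG0m : Measurable (fun q : (Fin p → ℝ) × ℝ =>
      Real.exp (Real.log (πs q.1 / (1 - πs q.1)) - Real.log (Ct q.1) + γ * s q.2) /
        (1 + Real.exp (Real.log (πs q.1 / (1 - πs q.1)) - Real.log (Ct q.1) + γ * s q.2))) := by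
    have h1 : Measurable (fun q : (Fin p → ℝ) × ℝ =>
        Real.log (πs q.1 / (1 - πs q.1)) - Real.log (Ct q.1) + γ * s q.2) :=
      ((Real.measurable_log.comp ((hπs.comp measurable_fst).div
          (measurable_const.sub (hπs.comp measurable_fst)))).sub
        (Real.measurable_log.comp (hCt.comp measurable_fst))).add
        (measurable_const.mul (hs.comp measurable_snd))
    exact (Real.measurable_exp.comp h1).div
      (measurable_const.add (Real.measurable_exp.comp h1))
  have hgb01 : ∀ ω, 0 ≤ (fun ω =>
        Real.exp (Real.log (πs (X ω) / (1 - πs (X ω))) - Real.log (Ct (X ω)) + γ * s (Yt ω)) /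
          (1 + Real.exp (Real.log (πs (X ω) / (1 - πs (X ω))) - Real.log (Ct (X ω))
            + γ * s (Yt ω)))) ω ∧ (fun ω =>
        Real.exp (Real.log (πs (X ω) / (1 - πs (X ω))) - Real.log (Ct (X ω)) + γ * s (Yt ω)) /
          (1 + Real.exp (Real.log (πs (X ω) / (1 - πs (X ω))) - Real.log (Ct (X ω))
            + γ * s (Yt ω)))) ω ≤ 1 := by
    intro ω
    have h1 := Real.exp_pos (Real.log (πs (X ω) / (1 - πs (X ω))) - Real.log (Ct (X ω))
      + γ * s (Yt ω))
    constructor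
    · positivity
    · rw [div_le_one (by linarith)]; linarith
  have hgint : Integrable (fun ω =>
      Real.exp (Real.log (πs (X ω) / (1 - πs (X ω))) - Real.log (Ct (X ω)) + γ * s (Yt ω)) /
        (1 + Real.exp (Real.log (πs (X ω) / (1 - πs (X ω))) - Real.log (Ct (X ω))
          + γ * s (Yt ω)))) P := by
    refine (integrable_const (1:ℝ)).mono' (hG0m.comp hXYm).aestronglyMeasurable ?_
    refine Filter.Eventually.of_forall fun ω => ?_
    rw [Real.norm_eq_abs, abs_of_nonneg (hgb01 ω).1]
    exact (hgb01 ω).2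
  refine (ae_eq_condExp_of_forall_setIntegral_eq hmXY hI1int
    (fun u _ _ => hgint.integrableOn) ?_
    ((hG0m.comp hXYm').stronglyMeasurable.aestronglyMeasurable)).symm
  rintro u ⟨A, hA, rfl⟩ -
  have hSm : MeasurableSet ((fun ω => (X ω, Yt ω)) ⁻¹' A) := hXYm hA
  have hιm : Measurable (fun ω => Set.indicator A (fun _ => (1:ℝ)) (X ω, Yt ω)) := (measurable_const.indicator hA).comp hXYm
  have hιb : ∀ ω, 0 ≤ Set.indicator A (fun _ => (1:ℝ)) (X ω, Yt ω) ∧ Set.indicator A (fun _ => (1:ℝ)) (X ω, Yt ω) ≤ 1 := by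
    intro ω; by_cases h : (X ω, Yt ω) ∈ A <;> simp [Set.indicator, h]
  have haam : Measurable (fun ω => πs (X ω) * Real.exp (γ * s (Yt ω))) := (hπs.comp hX).mul hem
  have hbbm : Measurable (fun ω => πt (X ω) * Ct (X ω)) := (hπt.comp hX).mul (hCt.comp hX)
  have hdinvm : Measurable (fun ω => (πs (X ω) * Real.exp (γ * s (Yt ω)) + πt (X ω) * Ct (X ω))⁻¹) := (haam.add hbbm).inv
  have hfrac : ∀ᵐ ω ∂P, 0 ≤ πt (X ω) * Ct (X ω) * (πs (X ω) * Real.exp (γ * s (Yt ω)) + πt (X ω) * Ct (X ω))⁻¹ ∧ πt (X ω) * Ct (X ω) * (πs (X ω) * Real.exp (γ * s (Yt ω)) + πt (X ω) * Ct (X ω))⁻¹ ≤ 1 ∧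
      0 ≤ πs (X ω) * Real.exp (γ * s (Yt ω)) * (πs (X ω) * Real.exp (γ * s (Yt ω)) + πt (X ω) * Ct (X ω))⁻¹ ∧ πs (X ω) * Real.exp (γ * s (Yt ω)) * (πs (X ω) * Real.exp (γ * s (Yt ω)) + πt (X ω) * Ct (X ω))⁻¹ ≤ 1 ∧
      πs (X ω) * Real.exp (γ * s (Yt ω)) * (πs (X ω) * Real.exp (γ * s (Yt ω)) + πt (X ω) * Ct (X ω))⁻¹ + πt (X ω) * Ct (X ω) * (πs (X ω) * Real.exp (γ * s (Yt ω)) + πt (X ω) * Ct (X ω))⁻¹ = 1 := by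
    filter_upwards [haefacts] with ω h
    have hD : 0 < πs (X ω) * Real.exp (γ * s (Yt ω)) + πt (X ω) * Ct (X ω) := by linarith [h.1, h.2]
    have hDinv : 0 < (πs (X ω) * Real.exp (γ * s (Yt ω)) + πt (X ω) * Ct (X ω))⁻¹ := inv_pos.mpr hD
    refine ⟨mul_nonneg h.2.le hDinv.le, ?_, mul_nonneg h.1.le hDinv.le, ?_, ?_⟩
    · rw [← div_eq_mul_inv, div_le_one hD]; linarith [h.1]
    · rw [← div_eq_mul_inv, div_le_one hD]; linarith [h.2]
    · rw [← div_eq_mul_inv, ← div_eq_mul_inv, ← add_div, div_self hD.ne']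
  have hr1nn : ∀ᵐ ω ∂P, 0 ≤ Set.indicator A (fun _ => (1:ℝ)) (X ω, Yt ω) * ((if T ω = 1 - t then (1:ℝ) else 0) * (πt (X ω) * Ct (X ω) * (πs (X ω) * Real.exp (γ * s (Yt ω)) + πt (X ω) * Ct (X ω))⁻¹)) := by
    filter_upwards [hfrac] with ω h
    exact mul_nonneg (hιb ω).1 (mul_nonneg (hI1b ω).1 h.1)
  have hr2nn : ∀ᵐ ω ∂P, 0 ≤ Set.indicator A (fun _ => (1:ℝ)) (X ω, Yt ω) * ((if T ω = t then (1:ℝ) else 0) * (πs (X ω) * Real.exp (γ * s (Yt ω)) * (πs (X ω) * Real.exp (γ * s (Yt ω)) + πt (X ω) * Ct (X ω))⁻¹)) := by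
    filter_upwards [hfrac] with ω h
    exact mul_nonneg (hιb ω).1 (mul_nonneg (hI0b ω).1 h.2.2.1)
  have hr1int : Integrable (fun ω => Set.indicator A (fun _ => (1:ℝ)) (X ω, Yt ω) * ((if T ω = 1 - t then (1:ℝ) else 0) * (πt (X ω) * Ct (X ω) * (πs (X ω) * Real.exp (γ * s (Yt ω)) + πt (X ω) * Ct (X ω))⁻¹))) P := by
    refine (integrable_const (1:ℝ)).mono'
      (hιm.mul (hI1m.mul (hbbm.mul hdinvm))).aestronglyMeasurable ?_
    filter_upwards [hfrac] with ω h
    rw [Real.norm_eq_abs, abs_of_nonneg (mul_nonneg (hιb ω).1 (mul_nonneg (hI1b ω).1 h.1))]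
    exact mul_le_one₀ (hιb ω).2 (mul_nonneg (hI1b ω).1 h.1)
      (mul_le_one₀ (hI1b ω).2 h.1 h.2.1)
  have hr2int : Integrable (fun ω => Set.indicator A (fun _ => (1:ℝ)) (X ω, Yt ω) * ((if T ω = t then (1:ℝ) else 0) * (πs (X ω) * Real.exp (γ * s (Yt ω)) * (πs (X ω) * Real.exp (γ * s (Yt ω)) + πt (X ω) * Ct (X ω))⁻¹))) P := by
    refine (integrable_const (1:ℝ)).mono'
      (hιm.mul (hI0m.mul (haam.mul hdinvm))).aestronglyMeasurable ?_
    filter_upwards [hfrac] with ω h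
    rw [Real.norm_eq_abs, abs_of_nonneg (mul_nonneg (hιb ω).1 (mul_nonneg (hI0b ω).1 h.2.2.1))]
    exact mul_le_one₀ (hιb ω).2 (mul_nonneg (hI0b ω).1 h.2.2.1)
      (mul_le_one₀ (hI0b ω).2 h.2.2.1 h.2.2.2.1)
  have hr3int : Integrable (fun ω => Set.indicator A (fun _ => (1:ℝ)) (X ω, Yt ω) * ((if T ω = 1 - t then (1:ℝ) else 0) * (πs (X ω) * Real.exp (γ * s (Yt ω)) * (πs (X ω) * Real.exp (γ * s (Yt ω)) + πt (X ω) * Ct (X ω))⁻¹))) P := by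
    refine (integrable_const (1:ℝ)).mono'
      (hιm.mul (hI1m.mul (haam.mul hdinvm))).aestronglyMeasurable ?_
    filter_upwards [hfrac] with ω h
    rw [Real.norm_eq_abs, abs_of_nonneg (mul_nonneg (hιb ω).1 (mul_nonneg (hI1b ω).1 h.2.2.1))]
    exact mul_le_one₀ (hιb ω).2 (mul_nonneg (hI1b ω).1 h.2.2.1)
      (mul_le_one₀ (hI1b ω).2 h.2.2.1 h.2.2.2.1)
  have hclaim1 : ∫ ω, Set.indicator A (fun _ => (1:ℝ)) (X ω, Yt ω) * ((if T ω = 1 - t then (1:ℝ) else 0) * (πt (X ω) * Ct (X ω) * (πs (X ω) * Real.exp (γ * s (Yt ω)) + πt (X ω) * Ct (X ω))⁻¹)) ∂P = ∫ ω, Set.indicator A (fun _ => (1:ℝ)) (X ω, Yt ω) * ((if T ω = t then (1:ℝ) else 0) * (πs (X ω) * Real.exp (γ * s (Yt ω)) * (πs (X ω) * Real.exp (γ * s (Yt ω)) + πt (X ω) * Ct (X ω))⁻¹)) ∂P := by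
    have h1 := hstepD A hA
    have hconv1 : ∫⁻ ω, ENNReal.ofReal (c ω * (if T ω = 1 - t then (1:ℝ) else 0)) *
          ((A.indicator (fun _ => (1:ENNReal)) (X ω, Yt ω)) *
            ENNReal.ofReal ((πs (X ω) * Real.exp (γ * s (Yt ω)) + πt (X ω) * Ct (X ω))⁻¹)) ∂P = ENNReal.ofReal (∫ ω, Set.indicator A (fun _ => (1:ℝ)) (X ω, Yt ω) * ((if T ω = 1 - t then (1:ℝ) else 0) * (πt (X ω) * Ct (X ω) * (πs (X ω) * Real.exp (γ * s (Yt ω)) + πt (X ω) * Ct (X ω))⁻¹)) ∂P) := by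
      rw [ofReal_integral_eq_lintegral_ofReal hr1int hr1nn]
      refine lintegral_congr_ae ?_
      filter_upwards [hceq, haefacts] with ω h2 h3
      have h2' : c ω = πt (X ω) * Ct (X ω) := h2
      by_cases hmem : (X ω, Yt ω) ∈ A
      · simp only [Set.indicator_of_mem hmem, one_mul]
        rw [h2', ← ENNReal.ofReal_mul (mul_nonneg h3.2.le (hI1b ω).1)]
        congr 1
        ring
      · simp only [Set.indicator_of_notMem hmem]
        simp
    have hconv2 : ∫⁻ ω, ENNReal.ofReal (πs (X ω) *
            (Real.exp (γ * s (Yt ω)) * (if T ω = t then (1:ℝ) else 0))) *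
          ((A.indicator (fun _ => (1:ENNReal)) (X ω, Yt ω)) *
            ENNReal.ofReal ((πs (X ω) * Real.exp (γ * s (Yt ω)) + πt (X ω) * Ct (X ω))⁻¹)) ∂P = ENNReal.ofReal (∫ ω, Set.indicator A (fun _ => (1:ℝ)) (X ω, Yt ω) * ((if T ω = t then (1:ℝ) else 0) * (πs (X ω) * Real.exp (γ * s (Yt ω)) * (πs (X ω) * Real.exp (γ * s (Yt ω)) + πt (X ω) * Ct (X ω))⁻¹)) ∂P) := by
      rw [ofReal_integral_eq_lintegral_ofReal hr2int hr2nn]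
      refine lintegral_congr_ae ?_
      filter_upwards [haefacts] with ω h3
      by_cases hmem : (X ω, Yt ω) ∈ A
      · simp only [Set.indicator_of_mem hmem, one_mul]
        have hπs0 : 0 ≤ πs (X ω) := by nlinarith [h3.1, Real.exp_pos (γ * s (Yt ω))]
        rw [← ENNReal.ofReal_mul (mul_nonneg hπs0 (mul_nonneg (Real.exp_pos _).le (hI0b ω).1))]
        congr 1
        ring
      · simp only [Set.indicator_of_notMem hmem]
        simp
    have hnn1 : 0 ≤ ∫ ω, Set.indicator A (fun _ => (1:ℝ)) (X ω, Yt ω) * ((if T ω = 1 - t then (1:ℝ) else 0) * (πt (X ω) * Ct (X ω) * (πs (X ω) * Real.exp (γ * s (Yt ω)) + πt (X ω) * Ct (X ω))⁻¹)) ∂P := integral_nonneg_of_ae hr1nn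
    have hnn2 : 0 ≤ ∫ ω, Set.indicator A (fun _ => (1:ℝ)) (X ω, Yt ω) * ((if T ω = t then (1:ℝ) else 0) * (πs (X ω) * Real.exp (γ * s (Yt ω)) * (πs (X ω) * Real.exp (γ * s (Yt ω)) + πt (X ω) * Ct (X ω))⁻¹)) ∂P := integral_nonneg_of_ae hr2nn
    have hfin := hconv1.symm.trans (h1.trans hconv2)
    exact (ENNReal.ofReal_eq_ofReal_iff hnn1 hnn2).mp hfin
  calc ∫ ω in (fun ω => (X ω, Yt ω)) ⁻¹' A, (fun ω =>
        Real.exp (Real.log (πs (X ω) / (1 - πs (X ω))) - Real.log (Ct (X ω)) + γ * s (Yt ω)) /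
          (1 + Real.exp (Real.log (πs (X ω) / (1 - πs (X ω))) - Real.log (Ct (X ω))
            + γ * s (Yt ω)))) ω ∂P
      = ∫ ω, Set.indicator ((fun ω => (X ω, Yt ω)) ⁻¹' A) (fun ω =>
          Real.exp (Real.log (πs (X ω) / (1 - πs (X ω))) - Real.log (Ct (X ω)) + γ * s (Yt ω)) /
          (1 + Real.exp (Real.log (πs (X ω) / (1 - πs (X ω))) - Real.log (Ct (X ω))
            + γ * s (Yt ω)))) ω ∂P := (integral_indicator hSm).symm
    _ = ∫ ω, (Set.indicator A (fun _ => (1:ℝ)) (X ω, Yt ω) * ((if T ω = t then (1:ℝ) else 0) * (πs (X ω) * Real.exp (γ * s (Yt ω)) * (πs (X ω) * Real.exp (γ * s (Yt ω)) + πt (X ω) * Ct (X ω))⁻¹)) + Set.indicator A (fun _ => (1:ℝ)) (X ω, Yt ω) * ((if T ω = 1 - t then (1:ℝ) else 0) * (πs (X ω) * Real.exp (γ * s (Yt ω)) * (πs (X ω) * Real.exp (γ * s (Yt ω)) + πt (X ω) * Ct (X ω))⁻¹))) ∂P := by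
        refine integral_congr_ae ?_
        filter_upwards [hg_ae, hfrac] with ω hg hfr
        have hg' : Real.exp (Real.log (πs (X ω) / (1 - πs (X ω))) - Real.log (Ct (X ω)) + γ * s (Yt ω)) /
          (1 + Real.exp (Real.log (πs (X ω) / (1 - πs (X ω))) - Real.log (Ct (X ω))
            + γ * s (Yt ω))) = πs (X ω) * Real.exp (γ * s (Yt ω)) * (πs (X ω) * Real.exp (γ * s (Yt ω)) + πt (X ω) * Ct (X ω))⁻¹ := hg
        by_cases hmem : (X ω, Yt ω) ∈ A
        · rw [Set.indicator_of_mem (show ω ∈ (fun ω => (X ω, Yt ω)) ⁻¹' A from hmem)]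
          simp only [Set.indicator_of_mem hmem]
          rw [hg']
          linear_combination (πs (X ω) * Real.exp (γ * s (Yt ω)) * (πs (X ω) * Real.exp (γ * s (Yt ω)) + πt (X ω) * Ct (X ω))⁻¹) * (hIsum ω).symm
        · rw [Set.indicator_of_notMem (show ω ∉ (fun ω => (X ω, Yt ω)) ⁻¹' A from hmem)]
          simp only [Set.indicator_of_notMem hmem]
          ring
    _ = (∫ ω, Set.indicator A (fun _ => (1:ℝ)) (X ω, Yt ω) * ((if T ω = t then (1:ℝ) else 0) * (πs (X ω) * Real.exp (γ * s (Yt ω)) * (πs (X ω) * Real.exp (γ * s (Yt ω)) + πt (X ω) * Ct (X ω))⁻¹)) ∂P) + ∫ ω, Set.indicator A (fun _ => (1:ℝ)) (X ω, Yt ω) * ((if T ω = 1 - t then (1:ℝ) else 0) * (πs (X ω) * Real.exp (γ * s (Yt ω)) * (πs (X ω) * Real.exp (γ * s (Yt ω)) + πt (X ω) * Ct (X ω))⁻¹)) ∂P := integral_add hr2int hr3int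
    _ = (∫ ω, Set.indicator A (fun _ => (1:ℝ)) (X ω, Yt ω) * ((if T ω = 1 - t then (1:ℝ) else 0) * (πt (X ω) * Ct (X ω) * (πs (X ω) * Real.exp (γ * s (Yt ω)) + πt (X ω) * Ct (X ω))⁻¹)) ∂P) + ∫ ω, Set.indicator A (fun _ => (1:ℝ)) (X ω, Yt ω) * ((if T ω = 1 - t then (1:ℝ) else 0) * (πs (X ω) * Real.exp (γ * s (Yt ω)) * (πs (X ω) * Real.exp (γ * s (Yt ω)) + πt (X ω) * Ct (X ω))⁻¹)) ∂P := by rw [hclaim1]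
    _ = ∫ ω, (Set.indicator A (fun _ => (1:ℝ)) (X ω, Yt ω) * ((if T ω = 1 - t then (1:ℝ) else 0) * (πt (X ω) * Ct (X ω) * (πs (X ω) * Real.exp (γ * s (Yt ω)) + πt (X ω) * Ct (X ω))⁻¹)) + Set.indicator A (fun _ => (1:ℝ)) (X ω, Yt ω) * ((if T ω = 1 - t then (1:ℝ) else 0) * (πs (X ω) * Real.exp (γ * s (Yt ω)) * (πs (X ω) * Real.exp (γ * s (Yt ω)) + πt (X ω) * Ct (X ω))⁻¹))) ∂P := (integral_add hr1int hr3int).symm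
    _ = ∫ ω, Set.indicator ((fun ω => (X ω, Yt ω)) ⁻¹' A)
          (fun ω => if T ω = 1 - t then (1:ℝ) else 0) ω ∂P := by
        refine integral_congr_ae ?_
        filter_upwards [hfrac] with ω hfr
        by_cases hmem : (X ω, Yt ω) ∈ A
        · rw [Set.indicator_of_mem (show ω ∈ (fun ω => (X ω, Yt ω)) ⁻¹' A from hmem)]
          simp only [Set.indicator_of_mem hmem]
          linear_combination (if T ω = 1 - t then (1:ℝ) else 0) * hfr.2.2.2.2
        · rw [Set.indicator_of_notMem (show ω ∉ (fun ω => (X ω, Yt ω)) ⁻¹' A from hmem)]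
          simp only [Set.indicator_of_notMem hmem]
          ring
    _ = ∫ ω in (fun ω => (X ω, Yt ω)) ⁻¹' A,
          (fun ω => if T ω = 1 - t then (1:ℝ) else 0) ω ∂P := integral_indicator hSm
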